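/- The identity of formal power series in q, x, y: \sum_{m,n \geq 0} q^{m^2+n^2-mn} x^m y^n / ((q)_m (q)_n) = \sum_{n_1,n_2,n_3 \geq 0} x^{n_1+n_2} y^{n_2+n_3} q^{n_1^2+n_2^2+n_3^2+n_1 n_2 + n_2 n_3} / ((q)_{n_1}(q)_{n_2}(q)_{n_3}). -/

import Mathlib

open MvPowerSeries

/-- Coefficientwise (product) topology on trivariate formal power series, with
discrete-like convergence of coefficients.  Infinite sums of power series whose
orders go to infinity converge in this topology. -/
noncomputable instance : TopologicalSpace (MvPowerSeries (Fin 3) ℚ) :=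
  inferInstanceAs (TopologicalSpace ((Fin 3 →₀ ℕ) → ℚ))

/-- `q`, `x`, `y` as formal variables. -/
noncomputable def q : MvPowerSeries (Fin 3) ℚ := X 0
noncomputable def x : MvPowerSeries (Fin 3) ℚ := X 1
noncomputable def y : MvPowerSeries (Fin 3) ℚ := X 2

/-- The q-Pochhammer symbol `(q;q)_k`. -/
noncomputable def qPoch (k : ℕ) : MvPowerSeries (Fin 3) ℚ :=
  ∏ i ∈ Finset.range k, (1 - q ^ (i + 1))

lemma qPoch_zero : qPoch 0 = 1 := by simp [qPoch]

lemma qPoch_succ (k : ℕ) : qPoch (k + 1) = qPoch k * (1 - q ^ (k + 1)) := by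
  simp [qPoch, Finset.prod_range_succ]

lemma constantCoeff_qPoch (k : ℕ) : constantCoeff (qPoch k) = 1 := by
  induction k with
  | zero => simp [qPoch_zero]
  | succ k ih => simp [qPoch_succ, ih, q]

lemma qPoch_ne_zero (k : ℕ) : qPoch k ≠ 0 := by
  intro h
  have := constantCoeff_qPoch k
  rw [h] at this
  simp at this

noncomputable def gb : ℕ → ℕ → MvPowerSeries (Fin 3) ℚ
  | _, 0 => 1
  | 0, _ + 1 => 0
  | m + 1, k + 1 => gb m (k + 1) + q ^ (m - k) * gb m k

lemma gb_zero_right (m : ℕ) : gb m 0 = 1 := by cases m <;> rfl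

lemma gb_eq_zero : ∀ m k : ℕ, m < k → gb m k = 0 := by
  intro m
  induction m with
  | zero => intro k hk; match k, hk with | k + 1, _ => rfl
  | succ m ih =>
    intro k hk
    match k, hk with
    | k + 1, hk =>
      show gb m (k + 1) + q ^ (m - k) * gb m k = 0
      rw [ih (k+1) (by omega), ih k (by omega)]
      ring

lemma gb_self : ∀ m : ℕ, gb m m = 1 := by
  intro m
  induction m with
  | zero => rfl
  | succ m ih =>
    show gb m (m + 1) + q ^ (m - m) * gb m m = 1
    rw [gb_eq_zero m (m+1) (by omega), ih]
    simp

lemma gb_mul : ∀ m k a : ℕ, k + a = m → gb m k * (qPoch k * qPoch a) = qPoch m := by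
  intro m
  induction m with
  | zero =>
    intro k a h
    obtain ⟨rfl, rfl⟩ : k = 0 ∧ a = 0 := by omega
    simp [gb_zero_right, qPoch_zero]
  | succ m ih =>
    intro k a h
    rcases k with _ | j
    · obtain rfl : a = m + 1 := by omega
      simp [gb_zero_right, qPoch_zero]
    · show (gb m (j + 1) + q ^ (m - j) * gb m j) * (qPoch (j + 1) * qPoch a) = qPoch (m + 1)
      rcases a with _ | b
      case zero =>
        obtain rfl : j = m := by omega
        rw [gb_eq_zero j (j+1) (by omega), gb_self, qPoch_zero, Nat.sub_self]
        ring
      · obtain rfl : m = j + 1 + b := by omega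
        have h1 : gb (j+1+b) (j+1) * (qPoch (j+1) * qPoch b) = qPoch (j+1+b) := ih (j+1) b rfl
        have h2 : gb (j+1+b) j * (qPoch j * qPoch (b+1)) = qPoch (j+1+b) := ih j (b+1) (by omega)
        have hsub : j + 1 + b - j = b + 1 := by omega
        rw [hsub, qPoch_succ (j+1+b), qPoch_succ b, qPoch_succ j] at *
        linear_combination (1 - q ^ (b+1)) * h1 + q ^ (b+1) * (1 - q ^ (j+1)) * h2

lemma gb_succ_rel (n k : ℕ) (h : k < n) :
    gb n (k + 1) * qPoch (k + 1) = gb n k * qPoch k * (1 - q ^ (n - k)) := by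
  obtain ⟨b, rfl⟩ : ∃ b, n = k + 1 + b := ⟨n - (k+1), by omega⟩
  have h1 : gb (k+1+b) (k+1) * (qPoch (k+1) * qPoch b) = qPoch (k+1+b) := gb_mul _ (k+1) b rfl
  have h2 : gb (k+1+b) k * (qPoch k * qPoch (b+1)) = qPoch (k+1+b) := gb_mul _ k (b+1) (by omega)
  have hsub : k + 1 + b - k = b + 1 := by omega
  rw [hsub]
  apply mul_right_cancel₀ (qPoch_ne_zero b)
  rw [qPoch_succ b] at h2
  linear_combination h1 - h2

lemma Tsum : ∀ m n : ℕ, m ≤ n → ∑ k ∈ Finset.range (m + 1),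
    q ^ ((m - k) * (n - k)) * (gb m k * gb n k * qPoch k) = 1 := by
  intro m
  induction m with
  | zero =>
    intro n _
    simp [gb_zero_right, qPoch_zero]
  | succ m IH =>
    intro n hn
    set t : ℕ → MvPowerSeries (Fin 3) ℚ :=
      fun k => q ^ ((m - k) * (n - k)) * (gb m k * gb n k * qPoch k) with ht
    set g : ℕ → MvPowerSeries (Fin 3) ℚ := fun k => q ^ (n - k) * t k with hg
    have hmain : ∀ k ∈ Finset.range (m + 1),
        q ^ ((m + 1 - (k + 1)) * (n - (k + 1))) * (gb (m+1) (k+1) * gb n (k+1) * qPoch (k+1))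
        = g (k + 1) + (t k - g k) := by
      intro k hk
      rw [Finset.mem_range] at hk
      have hkm : k ≤ m := by omega
      have hgb : gb (m+1) (k+1) = gb m (k+1) + q ^ (m - k) * gb m k := rfl
      have hrel : gb n (k+1) * qPoch (k+1) = gb n k * qPoch k * (1 - q ^ (n - k)) :=
        gb_succ_rel n k (by omega)
      have e1 : m + 1 - (k + 1) = m - k := by omega
      rw [hgb, e1]
      -- split into the two pieces
      have hA : q ^ ((m - k) * (n - (k+1))) * (gb m (k+1) * gb n (k+1) * qPoch (k+1))
          = g (k + 1) := by
        rcases Nat.lt_or_ge k m with hlt | hge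
        · have e2 : (m - k) * (n - (k+1)) = (n - (k+1)) + (m - (k+1)) * (n - (k+1)) := by
            have : m - k = 1 + (m - (k+1)) := by omega
            rw [this]; ring
          rw [e2, pow_add, hg]
          simp only [ht]
          ring
        · have hkm' : k = m := by omega
          subst hkm'
          rw [gb_eq_zero k (k+1) (by omega)]
          simp [hg, ht, gb_eq_zero k (k+1) (by omega)]
      have hB : q ^ ((m - k) * (n - (k+1))) * (q ^ (m - k) * gb m k * (gb n (k+1) * qPoch (k+1)))
          = t k - g k := by
        rw [hrel]
        have e3 : (m - k) * (n - (k+1)) + (m - k) = (m - k) * (n - k) := by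
          have h1 : n - (k+1) + 1 = n - k := by omega
          calc (m - k) * (n - (k+1)) + (m - k) = (m - k) * ((n - (k+1)) + 1) := by ring
          _ = (m - k) * (n - k) := by rw [h1]
        calc q ^ ((m - k) * (n - (k+1))) * (q ^ (m - k) * gb m k * (gb n k * qPoch k * (1 - q ^ (n - k))))
            = q ^ ((m - k) * (n - (k+1)) + (m - k)) * (gb m k * (gb n k * qPoch k * (1 - q ^ (n - k)))) := by
              rw [pow_add]; ring
        _ = q ^ ((m - k) * (n - k)) * (gb m k * (gb n k * qPoch k * (1 - q ^ (n - k)))) := by rw [e3]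
        _ = t k - g k := by simp only [ht, hg]; ring
      calc q ^ ((m - k) * (n - (k+1))) * ((gb m (k+1) + q ^ (m - k) * gb m k) * gb n (k+1) * qPoch (k+1))
          = q ^ ((m - k) * (n - (k+1))) * (gb m (k+1) * gb n (k+1) * qPoch (k+1))
            + q ^ ((m - k) * (n - (k+1))) * (q ^ (m - k) * gb m k * (gb n (k+1) * qPoch (k+1))) := by ring
      _ = g (k + 1) + (t k - g k) := by rw [hA, hB]
    rw [Finset.sum_range_succ']
    rw [Finset.sum_congr rfl hmain]
    have hg1 : ∑ k ∈ Finset.range (m + 1), g (k + 1)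
        = ∑ k ∈ Finset.range (m + 1), g k + g (m + 1) - g 0 := by
      have a1 := Finset.sum_range_succ' g (m + 1)
      have a2 := Finset.sum_range_succ g (m + 1)
      rw [a2] at a1
      linear_combination -a1
    have hgm : g (m + 1) = 0 := by
      simp [hg, ht, gb_eq_zero m (m+1) (by omega)]
    have hf0 : q ^ ((m + 1 - 0) * (n - 0)) * (gb (m+1) 0 * gb n 0 * qPoch 0) = g 0 := by
      simp only [hg, ht, Nat.sub_zero, gb_zero_right, qPoch_zero]
      have e : (m + 1) * n = n + m * n := by ring
      rw [e, pow_add]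
      ring
    have hIH : ∑ k ∈ Finset.range (m + 1), t k = 1 := IH n (by omega)
    rw [Finset.sum_add_distrib, Finset.sum_sub_distrib, hg1, hgm, hf0, hIH]
    ring

lemma Tsym (m n : ℕ) : ∑ k ∈ Finset.range (min m n + 1),
    q ^ ((m - k) * (n - k)) * (gb m k * gb n k * qPoch k) = 1 := by
  rcases le_total m n with h | h
  · rw [min_eq_left h]
    exact Tsum m n h
  · rw [min_eq_right h]
    rw [← Tsum n m h]
    apply Finset.sum_congr rfl
    intro k _
    rw [Nat.mul_comm (n - k)]
    ring

lemma mul_le_sq_add_sq (u v : ℕ) : u * v ≤ u ^ 2 + v ^ 2 := by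
  rcases le_total u v with h | h
  · calc u * v ≤ v * v := Nat.mul_le_mul_right v h
    _ = v ^ 2 := (sq v).symm
    _ ≤ u ^ 2 + v ^ 2 := Nat.le_add_left _ _
  · calc u * v ≤ u * u := Nat.mul_le_mul_left u h
    _ = u ^ 2 := (sq u).symm
    _ ≤ u ^ 2 + v ^ 2 := Nat.le_add_right _ _

lemma constantCoeff_ne_zero_of_qPoch3 (a b c : ℕ) :
    constantCoeff (qPoch a * qPoch b * qPoch c) ≠ 0 := by
  simp [map_mul, constantCoeff_qPoch]

lemma constantCoeff_ne_zero_of_qPoch2 (a b : ℕ) :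
    constantCoeff (qPoch a * qPoch b) ≠ 0 := by
  simp [map_mul, constantCoeff_qPoch]

lemma per_term (k a b : ℕ) :
    q ^ ((k + a) ^ 2 + (k + b) ^ 2 - (k + a) * (k + b)) * x ^ (k + a) * y ^ (k + b) *
      (qPoch (k + a) * qPoch (k + b))⁻¹ *
      (q ^ (a * b) * (gb (k + a) k * gb (k + b) k * qPoch k)) =
    x ^ (a + k) * y ^ (k + b) * q ^ (a ^ 2 + k ^ 2 + b ^ 2 + a * k + k * b) *
      (qPoch a * qPoch k * qPoch b)⁻¹ := by
  have h1 : gb (k + a) k * (qPoch k * qPoch a) = qPoch (k + a) := gb_mul _ k a rfl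
  have h2 : gb (k + b) k * (qPoch k * qPoch b) = qPoch (k + b) := gb_mul _ k b rfl
  have hZ1 := constantCoeff_ne_zero_of_qPoch2 (k + a) (k + b)
  have hZ2 := constantCoeff_ne_zero_of_qPoch3 a k b
  have hq : (q : MvPowerSeries (Fin 3) ℚ) ^ ((k + a) ^ 2 + (k + b) ^ 2 - (k + a) * (k + b))
        * q ^ (a * b) = q ^ (a ^ 2 + k ^ 2 + b ^ 2 + a * k + k * b) := by
    rw [← pow_add]
    congr 1
    have hle : (k + a) * (k + b) ≤ (k + a) ^ 2 + (k + b) ^ 2 := mul_le_sq_add_sq _ _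
    zify [hle]
    ring
  have hGZ : (gb (k + a) k * gb (k + b) k * qPoch k) * (qPoch a * qPoch k * qPoch b)
      = qPoch (k + a) * qPoch (k + b) := by
    rw [← h1, ← h2]; ring
  have hinv : (qPoch a * qPoch k * qPoch b)⁻¹
      = gb (k + a) k * gb (k + b) k * qPoch k * (qPoch (k + a) * qPoch (k + b))⁻¹ := by
    rw [eq_comm, MvPowerSeries.eq_inv_iff_mul_eq_one hZ2]
    calc gb (k + a) k * gb (k + b) k * qPoch k * (qPoch (k + a) * qPoch (k + b))⁻¹ *
          (qPoch a * qPoch k * qPoch b)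
        = (qPoch (k + a) * qPoch (k + b))⁻¹ *
            ((gb (k + a) k * gb (k + b) k * qPoch k) * (qPoch a * qPoch k * qPoch b)) := by ring
    _ = 1 := by rw [hGZ, MvPowerSeries.inv_mul_cancel _ hZ1]
  rw [hinv, ← hq]
  ring

noncomputable def Fterm (p : ℕ × ℕ) : MvPowerSeries (Fin 3) ℚ :=
  q ^ (p.1 ^ 2 + p.2 ^ 2 - p.1 * p.2) * x ^ p.1 * y ^ p.2 * (qPoch p.1 * qPoch p.2)⁻¹

noncomputable def Gterm (t : ℕ × ℕ × ℕ) : MvPowerSeries (Fin 3) ℚ :=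
  x ^ (t.1 + t.2.1) * y ^ (t.2.1 + t.2.2) *
    q ^ (t.1 ^ 2 + t.2.1 ^ 2 + t.2.2 ^ 2 + t.1 * t.2.1 + t.2.1 * t.2.2) *
    (qPoch t.1 * qPoch t.2.1 * qPoch t.2.2)⁻¹

lemma key (m n : ℕ) :
    Fterm (m, n) = ∑ k ∈ Finset.range (min m n + 1), Gterm (m - k, k, n - k) := by
  have hT := Tsym m n
  calc Fterm (m, n) = Fterm (m, n) *
      ∑ k ∈ Finset.range (min m n + 1), q ^ ((m - k) * (n - k)) * (gb m k * gb n k * qPoch k) := by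
        rw [hT, mul_one]
  _ = ∑ k ∈ Finset.range (min m n + 1),
      Fterm (m, n) * (q ^ ((m - k) * (n - k)) * (gb m k * gb n k * qPoch k)) := by
        rw [Finset.mul_sum]
  _ = ∑ k ∈ Finset.range (min m n + 1), Gterm (m - k, k, n - k) := by
        apply Finset.sum_congr rfl
        intro k hk
        rw [Finset.mem_range] at hk
        obtain ⟨a, ha⟩ : ∃ a, m = k + a := ⟨m - k, by omega⟩
        obtain ⟨b, hb⟩ : ∃ b, n = k + b := ⟨n - k, by omega⟩
        subst ha hb
        simp only [Fterm, Gterm, Nat.add_sub_cancel_left]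
        exact per_term k a b

lemma coeff_X_pow_mul_eq_zero {i : Fin 3} {m : ℕ} {A : MvPowerSeries (Fin 3) ℚ} {d : Fin 3 →₀ ℕ}
    (h : d i < m) : coeff d ((X i : MvPowerSeries (Fin 3) ℚ) ^ m * A) = 0 := by
  classical
  rw [MvPowerSeries.coeff_mul]
  apply Finset.sum_eq_zero
  rintro ⟨e, f⟩ hef
  replace hef : e + f = d := by simpa using hef
  rw [MvPowerSeries.coeff_X_pow]
  split_ifs with he
  · exfalso
    subst he
    have h2 : Finsupp.single i m i + f i = d i := by rw [← Finsupp.add_apply, hef]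
    rw [Finsupp.single_eq_same] at h2
    omega
  · simp

lemma coeff_Fterm_eq_zero {d : Fin 3 →₀ ℕ} {p : ℕ × ℕ} (h : d 1 < p.1 ∨ d 2 < p.2) :
    coeff d (Fterm p) = 0 := by
  rcases h with h | h
  · have : Fterm p = (X 1 : MvPowerSeries (Fin 3) ℚ) ^ p.1 *
        (q ^ (p.1 ^ 2 + p.2 ^ 2 - p.1 * p.2) * y ^ p.2 * (qPoch p.1 * qPoch p.2)⁻¹) := by
      show Fterm p = x ^ p.1 * _
      rw [Fterm]; ring
    rw [this]
    exact coeff_X_pow_mul_eq_zero h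
  · have : Fterm p = (X 2 : MvPowerSeries (Fin 3) ℚ) ^ p.2 *
        (q ^ (p.1 ^ 2 + p.2 ^ 2 - p.1 * p.2) * x ^ p.1 * (qPoch p.1 * qPoch p.2)⁻¹) := by
      show Fterm p = y ^ p.2 * _
      rw [Fterm]; ring
    rw [this]
    exact coeff_X_pow_mul_eq_zero h

lemma coeff_Gterm_eq_zero {d : Fin 3 →₀ ℕ} {t : ℕ × ℕ × ℕ}
    (h : d 1 < t.1 + t.2.1 ∨ d 2 < t.2.1 + t.2.2) :
    coeff d (Gterm t) = 0 := by
  rcases h with h | h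
  · have : Gterm t = (X 1 : MvPowerSeries (Fin 3) ℚ) ^ (t.1 + t.2.1) *
        (y ^ (t.2.1 + t.2.2) * q ^ (t.1 ^ 2 + t.2.1 ^ 2 + t.2.2 ^ 2 + t.1 * t.2.1 + t.2.1 * t.2.2) *
          (qPoch t.1 * qPoch t.2.1 * qPoch t.2.2)⁻¹) := by
      show Gterm t = x ^ (t.1 + t.2.1) * _
      rw [Gterm]; ring
    rw [this]
    exact coeff_X_pow_mul_eq_zero h
  · have : Gterm t = (X 2 : MvPowerSeries (Fin 3) ℚ) ^ (t.2.1 + t.2.2) *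
        (x ^ (t.1 + t.2.1) * q ^ (t.1 ^ 2 + t.2.1 ^ 2 + t.2.2 ^ 2 + t.1 * t.2.1 + t.2.1 * t.2.2) *
          (qPoch t.1 * qPoch t.2.1 * qPoch t.2.2)⁻¹) := by
      show Gterm t = y ^ (t.2.1 + t.2.2) * _
      rw [Gterm]; ring
    rw [this]
    exact coeff_X_pow_mul_eq_zero h

lemma summable_Fterm : Summable Fterm := by
  apply Pi.summable.mpr
  intro d
  apply summable_of_ne_finset_zero
    (s := Finset.range (d 1 + 1) ×ˢ Finset.range (d 2 + 1))
  intro p hp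
  have hp' : d 1 < p.1 ∨ d 2 < p.2 := by
    simp only [Finset.mem_product, Finset.mem_range] at hp
    omega
  exact coeff_Fterm_eq_zero hp'

lemma summable_Gterm : Summable Gterm := by
  apply Pi.summable.mpr
  intro d
  apply summable_of_ne_finset_zero
    (s := Finset.range (d 1 + 1) ×ˢ Finset.range (d 1 + 1) ×ˢ Finset.range (d 2 + 1))
  intro t ht
  have ht' : d 1 < t.1 + t.2.1 ∨ d 2 < t.2.1 + t.2.2 := by
    simp only [Finset.mem_product, Finset.mem_range] at ht
    omega
  exact coeff_Gterm_eq_zero ht'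

/-- Feigin–Stoyanovsky character identity for the level one principal subspace of `sl₃`:
`∑_{m,n ≥ 0} q^{m²+n²-mn} x^m y^n / ((q)_m (q)_n)
  = ∑_{n₁,n₂,n₃ ≥ 0} x^{n₁+n₂} y^{n₂+n₃} q^{n₁²+n₂²+n₃²+n₁n₂+n₂n₃} / ((q)_{n₁}(q)_{n₂}(q)_{n₃})`. -/
theorem sl3_principal_subspace_identity :
    (∑' p : ℕ × ℕ,
      q ^ (p.1 ^ 2 + p.2 ^ 2 - p.1 * p.2) * x ^ p.1 * y ^ p.2 *
        (qPoch p.1 * qPoch p.2)⁻¹) =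
    ∑' t : ℕ × ℕ × ℕ,
      x ^ (t.1 + t.2.1) * y ^ (t.2.1 + t.2.2) *
        q ^ (t.1 ^ 2 + t.2.1 ^ 2 + t.2.2 ^ 2 + t.1 * t.2.1 + t.2.1 * t.2.2) *
        (qPoch t.1 * qPoch t.2.1 * qPoch t.2.2)⁻¹ := by
  classical
  show (∑' p : ℕ × ℕ, Fterm p) = ∑' t : ℕ × ℕ × ℕ, Gterm t
  apply MvPowerSeries.ext
  intro d
  have hL : coeff d (∑' p : ℕ × ℕ, Fterm p) = ∑' p : ℕ × ℕ, coeff d (Fterm p) :=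
    tsum_apply summable_Fterm
  have hR : coeff d (∑' t : ℕ × ℕ × ℕ, Gterm t) = ∑' t : ℕ × ℕ × ℕ, coeff d (Gterm t) :=
    tsum_apply summable_Gterm
  rw [hL, hR]
  set SL : Finset (ℕ × ℕ) := Finset.range (d 1 + 1) ×ˢ Finset.range (d 2 + 1) with hSL
  set ST : Finset (ℕ × ℕ × ℕ) :=
    Finset.range (d 1 + 1) ×ˢ Finset.range (d 1 + 1) ×ˢ Finset.range (d 2 + 1) with hST
  rw [tsum_eq_sum (s := SL) (fun p hp => coeff_Fterm_eq_zero (by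
    simp only [hSL, Finset.mem_product, Finset.mem_range] at hp; omega))]
  rw [tsum_eq_sum (s := ST) (fun t ht => coeff_Gterm_eq_zero (by
    simp only [hST, Finset.mem_product, Finset.mem_range] at ht; omega))]
  set STg : Finset (ℕ × ℕ × ℕ) :=
    ST.filter (fun t => t.1 + t.2.1 ≤ d 1 ∧ t.2.1 + t.2.2 ≤ d 2) with hSTg
  have hsub : ∑ t ∈ STg, coeff d (Gterm t) = ∑ t ∈ ST, coeff d (Gterm t) := by
    apply Finset.sum_subset (Finset.filter_subset _ _)
    intro t htT htg
    apply coeff_Gterm_eq_zero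
    simp only [hSTg, Finset.mem_filter, htT, true_and, not_and, not_le] at htg
    omega
  rw [← hsub]
  calc ∑ p ∈ SL, coeff d (Fterm p)
      = ∑ p ∈ SL, ∑ k ∈ Finset.range (min p.1 p.2 + 1),
          coeff d (Gterm (p.1 - k, k, p.2 - k)) := by
        apply Finset.sum_congr rfl
        intro p _
        rw [show Fterm p = Fterm (p.1, p.2) from rfl, key p.1 p.2, map_sum]
  _ = ∑ σ ∈ SL.sigma (fun p => Finset.range (min p.1 p.2 + 1)),
          coeff d (Gterm (σ.1.1 - σ.2, σ.2, σ.1.2 - σ.2)) := by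
        exact Finset.sum_sigma' SL (fun p => Finset.range (min p.1 p.2 + 1))
          (fun p k => coeff d (Gterm (p.1 - k, k, p.2 - k)))
  _ = ∑ t ∈ STg, coeff d (Gterm t) := by
        apply Finset.sum_nbij' (i := fun σ => (σ.1.1 - σ.2, σ.2, σ.1.2 - σ.2))
          (j := fun t => ⟨(t.1 + t.2.1, t.2.1 + t.2.2), t.2.1⟩)
        · rintro ⟨⟨m, n⟩, k⟩ hσ
          simp only [Finset.mem_sigma, hSL, Finset.mem_product, Finset.mem_range] at hσ
          simp only [hSTg, hST, Finset.mem_filter, Finset.mem_product, Finset.mem_range]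
          omega
        · rintro ⟨n1, n2, n3⟩ ht
          simp only [hSTg, hST, Finset.mem_filter, Finset.mem_product, Finset.mem_range] at ht
          simp only [Finset.mem_sigma, hSL, Finset.mem_product, Finset.mem_range]
          omega
        · rintro ⟨⟨m, n⟩, k⟩ hσ
          simp only [Finset.mem_sigma, hSL, Finset.mem_product, Finset.mem_range] at hσ
          have h1 : m - k + k = m := by omega
          have h2 : k + (n - k) = n := by omega
          simp only [h1, h2]
        · rintro ⟨n1, n2, n3⟩ ht
          simp only [Nat.add_sub_cancel, Nat.add_sub_cancel_left]
        · rintro ⟨⟨m, n⟩, k⟩ _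
          rfl
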